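/- Every finite metric satisfying the four-point condition is a tree metric: let S be a finite set and D a metric on S such that for all w, x, y, z ∈ S, D(x,w) + D(y,z) ≤ max( D(x,y) + D(z,w), D(x,z) + D(y,w) ). Then there exists a finite connected acyclic simple graph T whose vertex set contains S, together with a nonnegative weight on each edge of T, such that for all a, b ∈ S, D(a,b) equals the sum of the edge weights along the unique path in T from a to b. -/

import Mathlib

universe u



structure RTree (V : Type u) where
  root : V
  pr : V → V
  hroot : pr root = root
  rooted : ∀ v, ∃ k, pr^[k] v = root
  dep : V → ℝ
  hdep0 : dep root = 0
  hmono : ∀ v, dep (pr v) ≤ dep v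

namespace RTree

variable {V : Type u} (T : RTree V)

def anc (c v : V) : Prop := ∃ k, T.pr^[k] v = c

noncomputable def ht (v : V) : ℕ := sInf {k | T.pr^[k] v = T.root}

variable {T}

lemma pr_iterate_root (k : ℕ) : T.pr^[k] T.root = T.root :=
  Function.iterate_fixed T.hroot k

lemma pr_ht (v : V) : T.pr^[T.ht v] v = T.root :=
  Nat.sInf_mem (T.rooted v)

lemma ht_le {v : V} {k : ℕ} (h : T.pr^[k] v = T.root) : T.ht v ≤ k :=
  Nat.sInf_le h

@[simp] lemma ht_root : T.ht T.root = 0 :=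
  Nat.le_zero.mp (ht_le (by simp))

lemma ht_eq_zero {v : V} (h : T.ht v = 0) : v = T.root := by
  have := pr_ht (T := T) v; rwa [h] at this

lemma ht_pr_lt {v : V} (h : v ≠ T.root) : T.ht (T.pr v) < T.ht v := by
  have h1 : T.ht v ≠ 0 := fun h0 => h (ht_eq_zero h0)
  have h2 : T.pr^[T.ht v - 1] (T.pr v) = T.root := by
    have := pr_ht (T := T) v
    rwa [← Nat.succ_pred_eq_of_ne_zero h1, Function.iterate_succ_apply] at this
  exact lt_of_le_of_lt (ht_le h2) (Nat.pred_lt h1)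

lemma pr_ne {v : V} (h : v ≠ T.root) : T.pr v ≠ v := by
  intro he
  have := ht_pr_lt (T := T) h
  rw [he] at this; exact lt_irrefl _ this

@[simp] lemma anc_refl (v : V) : T.anc v v := ⟨0, rfl⟩

lemma anc_root (v : V) : T.anc T.root v := ⟨T.ht v, pr_ht v⟩

lemma anc_trans {c d v : V} (h1 : T.anc c v) (h2 : T.anc d c) : T.anc d v := by
  obtain ⟨k, hk⟩ := h1; obtain ⟨j, hj⟩ := h2
  exact ⟨j + k, by rw [Function.iterate_add_apply, hk, hj]⟩

lemma anc_pr (v : V) : T.anc (T.pr v) v := ⟨1, rfl⟩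

lemma anc_of_anc_pr {c v : V} (h : T.anc c (T.pr v)) : T.anc c v := by
  obtain ⟨k, hk⟩ := h; exact ⟨k + 1, by rwa [Function.iterate_add_apply]⟩

lemma anc_iff (c v : V) : T.anc c v ↔ v = c ∨ T.anc c (T.pr v) := by
  constructor
  · rintro ⟨k, hk⟩
    cases k with
    | zero => exact Or.inl hk
    | succ n => exact Or.inr ⟨n, by rwa [Function.iterate_succ_apply] at hk⟩
  · rintro (rfl | h)
    · exact anc_refl v
    · exact anc_of_anc_pr h

lemma anc_root_eq {c : V} (h : T.anc c T.root) : c = T.root := by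
  obtain ⟨k, hk⟩ := h
  rw [pr_iterate_root] at hk; exact hk.symm

lemma anc_ht : ∀ (k : ℕ) {v c : V}, T.pr^[k] v = c → c = v ∨ T.ht c < T.ht v := by
  intro k
  induction k with
  | zero => intro v c h; exact Or.inl h.symm
  | succ n ih =>
    intro v c h
    rw [Function.iterate_succ_apply] at h
    by_cases hv : v = T.root
    · subst hv
      rw [T.hroot] at h
      exact ih h
    · rcases ih h with rfl | hlt
      · exact Or.inr (ht_pr_lt hv)
      · exact Or.inr (lt_trans hlt (ht_pr_lt hv))

lemma anc_ht' {c v : V} (h : T.anc c v) : c = v ∨ T.ht c < T.ht v := by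
  obtain ⟨k, hk⟩ := h; exact anc_ht k hk

lemma anc_antisymm {c v : V} (h1 : T.anc c v) (h2 : T.anc v c) : c = v := by
  rcases anc_ht' h1 with h | h
  · exact h
  · rcases anc_ht' h2 with h' | h'
    · exact h'.symm
    · exact absurd (lt_trans h h') (lt_irrefl _)

lemma not_anc_pr_self {v : V} (h : v ≠ T.root) : ¬ T.anc v (T.pr v) := by
  intro ha
  rcases anc_ht' ha with he | hlt
  · exact pr_ne h he.symm
  · exact absurd (lt_trans hlt (ht_pr_lt h)) (lt_irrefl _)

lemma anc_total {c d v : V} (h1 : T.anc c v) (h2 : T.anc d v) : T.anc c d ∨ T.anc d c := by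
  obtain ⟨i, hi⟩ := h1; obtain ⟨j, hj⟩ := h2
  rcases le_total i j with h | h
  · right
    refine ⟨j - i, ?_⟩
    rw [← hi, ← Function.iterate_add_apply, Nat.sub_add_cancel h, hj]
  · left
    refine ⟨i - j, ?_⟩
    rw [← hj, ← Function.iterate_add_apply, Nat.sub_add_cancel h, hi]

lemma anc_of_ne {c v : V} (h : T.anc c v) (hne : v ≠ c) : T.anc c (T.pr v) := by
  rcases (anc_iff c v).mp h with he | h'
  · exact absurd he hne
  · exact h'

/-- depth is monotone along ancestors -/
lemma dep_iterate (k : ℕ) (v : V) : T.dep (T.pr^[k] v) ≤ T.dep v := by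
  induction k with
  | zero => simp
  | succ n ih =>
    rw [Function.iterate_succ_apply']
    exact le_trans (T.hmono _) ih

lemma dep_anc_le {c v : V} (h : T.anc c v) : T.dep c ≤ T.dep v := by
  obtain ⟨k, hk⟩ := h; rw [← hk]; exact dep_iterate k v

lemma dep_nonneg (v : V) : 0 ≤ T.dep v := by
  have := dep_anc_le (anc_root (T := T) v)
  rwa [T.hdep0] at this

variable (T)

open Classical in
noncomputable def lca (u v : V) : V :=
  if h : T.anc u v then u else lca (T.pr u) v
termination_by T.ht u
decreasing_by
  exact ht_pr_lt (fun he => h (he ▸ anc_root v))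

variable {T}

lemma lca_spec : ∀ (n : ℕ) (u v : V), T.ht u ≤ n →
    T.anc (T.lca u v) u ∧ T.anc (T.lca u v) v ∧
      ∀ c, T.anc c u → T.anc c v → T.anc c (T.lca u v) := by
  intro n
  induction n with
  | zero =>
    intro u v h
    have hu : u = T.root := ht_eq_zero (Nat.le_zero.mp h)
    subst hu
    rw [lca, dif_pos (anc_root v)]
    exact ⟨anc_refl _, anc_root v, fun c hc _ => hc⟩
  | succ n ih =>
    intro u v h
    by_cases hav : T.anc u v
    · rw [lca, dif_pos hav]
      exact ⟨anc_refl _, hav, fun c hc _ => hc⟩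
    · have hu : u ≠ T.root := fun he => hav (by subst he; exact anc_root v)
      rw [lca, dif_neg hav]
      have hht : T.ht (T.pr u) ≤ n := Nat.lt_succ_iff.mp (lt_of_lt_of_le (ht_pr_lt hu) h)
      obtain ⟨h1, h2, h3⟩ := ih (T.pr u) v hht
      refine ⟨anc_of_anc_pr h1, h2, fun c hc hcv => ?_⟩
      have hcne : u ≠ c := fun he => hav (by subst he; exact hcv)
      exact h3 c (anc_of_ne hc hcne) hcv

lemma lca_anc_left (u v : V) : T.anc (T.lca u v) u := (lca_spec (T.ht u) u v le_rfl).1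
lemma lca_anc_right (u v : V) : T.anc (T.lca u v) v := (lca_spec (T.ht u) u v le_rfl).2.1
lemma lca_max {u v c : V} (h1 : T.anc c u) (h2 : T.anc c v) : T.anc c (T.lca u v) :=
  (lca_spec (T.ht u) u v le_rfl).2.2 c h1 h2

lemma lca_char {u v l : V} (h1 : T.anc l u) (h2 : T.anc l v)
    (h3 : ∀ c, T.anc c u → T.anc c v → T.anc c l) : T.lca u v = l :=
  anc_antisymm (h3 _ (lca_anc_left u v) (lca_anc_right u v)) (lca_max h1 h2)

lemma lca_comm (u v : V) : T.lca u v = T.lca v u :=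
  lca_char (lca_anc_right v u) (lca_anc_left v u) (fun c h1 h2 => lca_max h2 h1)

@[simp] lemma lca_self (u : V) : T.lca u u = u :=
  lca_char (anc_refl u) (anc_refl u) (fun _ hc _ => hc)

@[simp] lemma lca_root_left (v : V) : T.lca T.root v = T.root :=
  lca_char (anc_refl _) (anc_root v) (fun c hc _ => by rw [anc_root_eq hc]; exact anc_refl _)

@[simp] lemma lca_root_right (v : V) : T.lca v T.root = T.root := by
  rw [lca_comm]; exact lca_root_left v

noncomputable def dv (u v : V) : ℝ := T.dep u + T.dep v - 2 * T.dep (T.lca u v)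

lemma dv_comm (u v : V) : T.dv u v = T.dv v u := by
  unfold dv; rw [lca_comm]; ring

@[simp] lemma dv_self (u : V) : T.dv u u = 0 := by
  unfold dv; simp; ring

@[simp] lemma dv_root (v : V) : T.dv T.root v = T.dep v := by
  unfold dv; simp [T.hdep0]

end RTree
section Graph

namespace RTree

open Finset

variable {V : Type u} [Fintype V] [DecidableEq V] (T : RTree V)

def graph : SimpleGraph V where
  Adj u v := u ≠ v ∧ (T.pr u = v ∨ T.pr v = u)
  symm := ⟨by rintro u v ⟨h1, h2⟩; exact ⟨h1.symm, h2.symm⟩⟩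
  loopless := ⟨by rintro u ⟨h1, _⟩; exact h1 rfl⟩

variable {T}

lemma graph_connected : T.graph.Connected := by
  have hreach : ∀ n (v : V), T.ht v ≤ n → T.graph.Reachable v T.root := by
    intro n
    induction n with
    | zero => intro v h; rw [ht_eq_zero (Nat.le_zero.mp h)]
    | succ n ih =>
      intro v h
      by_cases hv : v = T.root
      · rw [hv]
      · have hadj : T.graph.Adj v (T.pr v) := ⟨(pr_ne hv).symm, Or.inl rfl⟩
        exact (hadj.reachable).trans
          (ih _ (Nat.lt_succ_iff.mp (lt_of_lt_of_le (ht_pr_lt hv) h)))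
  haveI : Nonempty V := ⟨T.root⟩
  exact SimpleGraph.Connected.mk (fun u v => (hreach _ u le_rfl).trans (hreach _ v le_rfl).symm)

/-- In a Sym2 equality for a parent edge, with `T.pr a = b`, `a ≠ b`, `c ≠ root`,
`s(a,b) = s(c, pr c)` iff `a = c`. -/
lemma edge_eq_iff {a b c : V} (hab : T.pr a = b) (hne : a ≠ b) (hc : c ≠ T.root) :
    s(a, b) = s(c, T.pr c) ↔ a = c := by
  constructor
  · intro h
    rw [Sym2.eq_iff] at h
    rcases h with ⟨h1, _⟩ | ⟨h1, h2⟩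
    · exact h1
    · exfalso
      have hcy : T.pr (T.pr c) = c := by rw [← h1, hab, h2]
      exact not_anc_pr_self hc ⟨1, by simpa using hcy⟩
  · rintro rfl
    rw [hab]

lemma graph_acyclic : T.graph.IsAcyclic := by
  intro w c hc
  have hsne : c.support.toFinset.Nonempty := by
    simp [SimpleGraph.Walk.support_ne_nil, List.toFinset_eq_empty_iff, Finset.nonempty_iff_ne_empty]
  obtain ⟨u, hu, hmax⟩ := Finset.exists_max_image c.support.toFinset (T.ht) hsne
  rw [List.mem_toFinset] at hu
  have hcyc : (c.rotate u hu).IsCycle := hc.rotate hu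
  have hsupp : ∀ x ∈ (c.rotate u hu).support, T.ht x ≤ T.ht u := by
    intro x hx
    apply hmax
    rw [List.mem_toFinset]
    rw [SimpleGraph.Walk.mem_support_iff] at hx
    cases' hx with h h
    · rwa [h]
    · have := (SimpleGraph.Walk.support_rotate c u hu).mem_iff.mp h
      rw [SimpleGraph.Walk.mem_support_iff]
      exact Or.inr this
  revert hcyc hsupp
  generalize c.rotate u hu = c'
  intro hcyc hsupp
  -- key: any neighbor of u on the cycle is pr u
  have hnb : ∀ x, T.graph.Adj u x → x ∈ c'.support → x = T.pr u := by
    intro x hadj hx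
    rcases hadj.2 with h | h
    · exact h.symm
    · exfalso
      have hxu : x ≠ u := hadj.1.symm
      have hxr : x ≠ T.root := by
        intro he; subst he; rw [T.hroot] at h; exact hxu h
      have := ht_pr_lt (T := T) hxr
      rw [h] at this
      exact absurd (hsupp x hx) (not_le.mpr this)
  cases c' with
  | nil => exact hcyc.ne_nil rfl
  | cons hadj q =>
    rename_i w1
    rw [SimpleGraph.Walk.cons_isCycle_iff] at hcyc
    -- the last edge of q also hits u
    have hqne : ¬ q.reverse.Nil := SimpleGraph.Walk.not_nil_of_ne hadj.1
    cases hq : q.reverse with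
    | nil => rw [hq] at hqne; exact hqne SimpleGraph.Walk.Nil.nil
    | cons hadj2 q2 =>
      rename_i w2
      have hw1 : w1 = T.pr u := by
        apply hnb _ hadj
        rw [SimpleGraph.Walk.support_cons]
        exact List.mem_cons_of_mem _ q.start_mem_support
      have hw2 : w2 = T.pr u := by
        apply hnb _ hadj2
        rw [SimpleGraph.Walk.support_cons]
        apply List.mem_cons_of_mem
        have : w2 ∈ q.reverse.support := by
          rw [hq, SimpleGraph.Walk.support_cons]
          exact List.mem_cons_of_mem _ q2.start_mem_support
        rwa [SimpleGraph.Walk.support_reverse, List.mem_reverse] at this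
      -- edge s(u,w2) ∈ q.edges
      have hmem : s(u, w2) ∈ q.edges := by
        have : s(u, w2) ∈ q.reverse.edges := by
          rw [hq, SimpleGraph.Walk.edges_cons]; exact List.mem_cons_self
        rwa [SimpleGraph.Walk.edges_reverse, List.mem_reverse] at this
      rw [hw2, ← hw1] at hmem
      exact hcyc.2 hmem

lemma graph_isTree : T.graph.IsTree := ⟨graph_connected, graph_acyclic⟩

end RTree
end Graph
namespace RTree
open Finset
open Classical in
noncomputable def wt {V : Type u} [Fintype V] [DecidableEq V] (T : RTree V) (e : Sym2 V) : ℝ :=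
  ∑ c ∈ Finset.univ.filter (fun c => c ≠ T.root),
    if e = s(c, T.pr c) then (T.dep c - T.dep (T.pr c)) else 0

section Graph2
open Classical

variable {V : Type u} [Fintype V] [DecidableEq V] {T : RTree V}

lemma wt_nonneg (e : Sym2 V) : 0 ≤ T.wt e := by
  apply Finset.sum_nonneg
  intro c _
  split_ifs
  · linarith [T.hmono c]
  · exact le_refl 0

lemma list_map_sum_sum {α β : Type*} (l : List α) (F : Finset β) (g : β → α → ℝ) :
    (l.map (fun e => ∑ c ∈ F, g c e)).sum = ∑ c ∈ F, (l.map (g c)).sum := by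
  induction l with
  | nil => simp
  | cons a t ih => simp [ih, Finset.sum_add_distrib]

lemma list_map_ite_sum {α : Type*} [DecidableEq α] (l : List α) (x : α) (w : ℝ) :
    (l.map (fun e => if e = x then w else 0)).sum = (l.count x : ℝ) * w := by
  induction l with
  | nil => simp
  | cons a t ih =>
    by_cases h : a = x <;> simp [h, ih, List.count_cons] <;> ring

lemma cross_iff_aux {a b c : V} (hab : T.pr a = b) (hne : a ≠ b) (hc : c ≠ T.root) :
    s(a, b) = s(c, T.pr c) ↔ ¬ (T.anc c a ↔ T.anc c b) := by
  have har : a ≠ T.root := by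
    intro he; subst he; rw [T.hroot] at hab; exact hne hab
  rw [edge_eq_iff hab hne hc]
  constructor
  · rintro rfl
    intro hiff
    exact not_anc_pr_self har (hab ▸ hiff.mp (anc_refl a))
  · intro hn
    by_contra hne'
    apply hn
    rw [anc_iff c a, hab]
    constructor
    · rintro (rfl | h)
      · exact absurd rfl hne'
      · exact h
    · exact Or.inr

lemma cross_iff {a b c : V} (hadj : T.graph.Adj a b) (hc : c ≠ T.root) :
    s(a, b) = s(c, T.pr c) ↔ ¬ (T.anc c a ↔ T.anc c b) := by
  rcases hadj.2 with h | h
  · exact cross_iff_aux h hadj.1 hc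
  · rw [Sym2.eq_swap, iff_comm (a := T.anc c a)]
    exact cross_iff_aux h hadj.1.symm hc

lemma count_parity {c : V} (hc : c ≠ T.root) {u v : V} (p : T.graph.Walk u v) :
    p.edges.count s(c, T.pr c) % 2 = if (T.anc c u ↔ T.anc c v) then 0 else 1 := by
  induction p with
  | nil => simp
  | cons hadj q ih =>
    rename_i a b w
    rw [SimpleGraph.Walk.edges_cons, List.count_cons]
    simp only [beq_iff_eq]
    have hcr := cross_iff hadj hc
    by_cases h1 : s(a, b) = s(c, T.pr c)
    · rw [if_pos h1]
      have hab := hcr.mp h1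
      by_cases h2 : (T.anc c b ↔ T.anc c w)
      · rw [if_pos h2] at ih
        rw [if_neg (show ¬(T.anc c a ↔ T.anc c w) by tauto)]
        omega
      · rw [if_neg h2] at ih
        rw [if_pos (show (T.anc c a ↔ T.anc c w) by tauto)]
        omega
    · rw [if_neg h1]
      have hab : (T.anc c a ↔ T.anc c b) := not_not.mp (fun hn => h1 (hcr.mpr hn))
      have he : (T.anc c a ↔ T.anc c w) = (T.anc c b ↔ T.anc c w) := propext (by tauto)
      rw [Nat.add_zero]
      simp only [he]
      exact ih

lemma count_path {c : V} (hc : c ≠ T.root) {u v : V} (p : T.graph.Walk u v)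
    (hp : p.IsPath) :
    p.edges.count s(c, T.pr c) = if (T.anc c u ↔ T.anc c v) then 0 else 1 := by
  have h1 := hp.isTrail.count_edges_le_one s(c, T.pr c)
  have h2 := count_parity hc p
  rw [Nat.mod_eq_of_lt (by omega)] at h2
  exact h2

lemma tele : ∀ (n : ℕ) (u l : V), T.ht u ≤ n → T.anc l u →
    ∑ c ∈ Finset.univ.filter (fun c => c ≠ T.root ∧ T.anc c u ∧ ¬ T.anc c l),
      (T.dep c - T.dep (T.pr c)) = T.dep u - T.dep l := by
  intro n
  induction n with
  | zero =>
    intro u l h hl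
    have hu : u = T.root := ht_eq_zero (Nat.le_zero.mp h)
    subst hu
    have : l = T.root := anc_root_eq hl
    subst this
    rw [Finset.sum_eq_zero, T.hdep0]; · ring
    intro c hcm
    simp only [Finset.mem_filter] at hcm
    exact absurd hcm.2.2.1 hcm.2.2.2
  | succ n ih =>
    intro u l h hl
    by_cases hul : u = l
    · subst hul
      rw [Finset.sum_eq_zero]; · ring
      intro c hcm
      simp only [Finset.mem_filter] at hcm
      exact absurd hcm.2.2.1 hcm.2.2.2
    · have hur : u ≠ T.root := by
        intro he; subst he; exact hul (anc_root_eq hl).symm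
      have hstep : T.anc l (T.pr u) := anc_of_ne hl hul
      have hht : T.ht (T.pr u) ≤ n := Nat.lt_succ_iff.mp (lt_of_lt_of_le (ht_pr_lt hur) h)
      have hset : Finset.univ.filter (fun c => c ≠ T.root ∧ T.anc c u ∧ ¬ T.anc c l)
          = insert u (Finset.univ.filter
              (fun c => c ≠ T.root ∧ T.anc c (T.pr u) ∧ ¬ T.anc c l)) := by
        ext c
        simp only [Finset.mem_filter, Finset.mem_insert, Finset.mem_univ, true_and]
        constructor
        · rintro ⟨hcr, hcu, hcl⟩
          rcases (anc_iff c u).mp hcu with rfl | h'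
          · exact Or.inl rfl
          · exact Or.inr ⟨hcr, h', hcl⟩
        · rintro (rfl | ⟨hcr, hcu, hcl⟩)
          · refine ⟨hur, anc_refl c, fun hcl => hul (anc_antisymm hcl hl)⟩
          · exact ⟨hcr, anc_of_anc_pr hcu, hcl⟩
      rw [hset, Finset.sum_insert, ih _ _ hht hstep]
      · ring
      · simp only [Finset.mem_filter]
        rintro ⟨-, -, hcu, -⟩
        exact not_anc_pr_self hur hcu

lemma cutsum (u v : V) :
    ∑ c ∈ Finset.univ.filter
        (fun c => c ≠ T.root ∧ ¬ (T.anc c u ↔ T.anc c v)), (T.dep c - T.dep (T.pr c))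
      = T.dv u v := by
  set l := T.lca u v with hl
  have h1 : T.anc l u := lca_anc_left u v
  have h2 : T.anc l v := lca_anc_right u v
  have hsplit : Finset.univ.filter (fun c => c ≠ T.root ∧ ¬ (T.anc c u ↔ T.anc c v))
      = (Finset.univ.filter (fun c => c ≠ T.root ∧ T.anc c u ∧ ¬ T.anc c l))
        ∪ (Finset.univ.filter (fun c => c ≠ T.root ∧ T.anc c v ∧ ¬ T.anc c l)) := by
    ext c
    simp only [Finset.mem_filter, Finset.mem_union, Finset.mem_univ, true_and]
    constructor
    · rintro ⟨hcr, hiff⟩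
      by_cases hcu : T.anc c u
      · have hcv : ¬ T.anc c v := fun hcv => hiff ⟨fun _ => hcv, fun _ => hcu⟩
        exact Or.inl ⟨hcr, hcu, fun hcl => hcv (anc_trans h2 hcl)⟩
      · have hcv : T.anc c v := by
          by_contra hcv
          exact hiff ⟨fun h => absurd h hcu, fun h => absurd h hcv⟩
        exact Or.inr ⟨hcr, hcv, fun hcl => hcu (anc_trans h1 hcl)⟩
    · rintro (⟨hcr, hcu, hcl⟩ | ⟨hcr, hcv, hcl⟩)
      · exact ⟨hcr, fun hiff => hcl (lca_max hcu (hiff.mp hcu))⟩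
      · exact ⟨hcr, fun hiff => hcl (lca_max (hiff.mpr hcv) hcv)⟩
  have hdisj : Disjoint
      (Finset.univ.filter (fun c => c ≠ T.root ∧ T.anc c u ∧ ¬ T.anc c l))
      (Finset.univ.filter (fun c => c ≠ T.root ∧ T.anc c v ∧ ¬ T.anc c l)) := by
    rw [Finset.disjoint_left]
    intro c hc1 hc2
    simp only [Finset.mem_filter] at hc1 hc2
    exact hc1.2.2.2 (lca_max hc1.2.2.1 hc2.2.2.1)
  rw [hsplit, Finset.sum_union hdisj, tele (T.ht u) u l le_rfl h1,
    tele (T.ht v) v l le_rfl h2]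
  unfold dv
  ring

theorem pathSum {u v : V} (p : T.graph.Walk u v) (hp : p.IsPath) :
    (p.edges.map T.wt).sum = T.dv u v := by
  unfold wt
  rw [list_map_sum_sum]
  have : ∀ c ∈ Finset.univ.filter (fun c => c ≠ T.root),
      (p.edges.map (fun e => if e = s(c, T.pr c) then (T.dep c - T.dep (T.pr c)) else 0)).sum
        = if (c ≠ T.root ∧ ¬ (T.anc c u ↔ T.anc c v)) then (T.dep c - T.dep (T.pr c)) else 0 := by
    intro c hcm
    simp only [Finset.mem_filter, Finset.mem_univ, true_and] at hcm
    rw [list_map_ite_sum, count_path hcm p hp]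
    by_cases h : (T.anc c u ↔ T.anc c v) <;> simp [h, hcm]
  rw [Finset.sum_congr rfl this, Finset.sum_filter_of_ne (by intro c _ hne; by_contra hcr; simp [hcr] at hne),
    ← Finset.sum_filter, cutsum]

end Graph2
end RTree
namespace RTree

section AddLeaf

variable {V : Type u} (T : RTree V) (h : ℝ) (hh : 0 ≤ h)

def addLeafPr : Option V → Option V
  | none => some T.root
  | some v => some (T.pr v)

lemma addLeafPr_iterate (k : ℕ) (v : V) :
    (T.addLeafPr)^[k] (some v) = some (T.pr^[k] v) := by
  induction k generalizing v with
  | zero => rfl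
  | succ n ih => rw [Function.iterate_succ_apply, Function.iterate_succ_apply]; exact ih _

def addLeaf : RTree (Option V) where
  root := some T.root
  pr := T.addLeafPr
  hroot := by simp [addLeafPr, T.hroot]
  rooted := by
    rintro (_ | v)
    · exact ⟨1, by simp [addLeafPr]⟩
    · exact ⟨T.ht v, by rw [addLeafPr_iterate, pr_ht]⟩
  dep := fun x => match x with
    | none => h
    | some v => T.dep v
  hdep0 := T.hdep0
  hmono := by
    rintro (_ | v)
    · simpa [addLeafPr, T.hdep0] using hh
    · exact T.hmono v

variable {T h hh}

@[simp] lemma addLeaf_root : (T.addLeaf h hh).root = some T.root := rfl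
@[simp] lemma addLeaf_dep_some (v : V) : (T.addLeaf h hh).dep (some v) = T.dep v := rfl
@[simp] lemma addLeaf_dep_none : (T.addLeaf h hh).dep none = h := rfl

lemma addLeaf_anc_some {c v : V} : (T.addLeaf h hh).anc (some c) (some v) ↔ T.anc c v := by
  constructor
  · rintro ⟨k, hk⟩
    rw [show (T.addLeaf h hh).pr = T.addLeafPr from rfl, addLeafPr_iterate] at hk
    exact ⟨k, by injection hk⟩
  · rintro ⟨k, hk⟩
    exact ⟨k, by rw [show (T.addLeaf h hh).pr = T.addLeafPr from rfl, addLeafPr_iterate, hk]⟩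

lemma addLeaf_anc_of_some {x : Option V} {v : V} (hx : (T.addLeaf h hh).anc x (some v)) :
    ∃ c, x = some c := by
  obtain ⟨k, hk⟩ := hx
  rw [show (T.addLeaf h hh).pr = T.addLeafPr from rfl, addLeafPr_iterate] at hk
  exact ⟨_, hk.symm⟩

lemma addLeaf_lca_some (a b : V) :
    (T.addLeaf h hh).lca (some a) (some b) = some (T.lca a b) := by
  apply lca_char
  · exact addLeaf_anc_some.mpr (lca_anc_left a b)
  · exact addLeaf_anc_some.mpr (lca_anc_right a b)
  · intro x hx1 hx2
    obtain ⟨c, rfl⟩ := addLeaf_anc_of_some hx1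
    exact addLeaf_anc_some.mpr
      (lca_max (addLeaf_anc_some.mp hx1) (addLeaf_anc_some.mp hx2))

lemma addLeaf_lca_none (a : V) :
    (T.addLeaf h hh).lca (some a) none = some T.root := by
  apply lca_char
  · exact addLeaf_anc_some.mpr (anc_root a)
  · exact ⟨1, rfl⟩
  · intro x hx1 hx2
    obtain ⟨c, rfl⟩ := addLeaf_anc_of_some hx1
    obtain ⟨k, hk⟩ := hx2
    cases k with
    | zero => exact absurd hk (by simp)
    | succ n =>
      rw [Function.iterate_succ_apply] at hk
      exact ⟨n, hk⟩

lemma addLeaf_dv_some (a b : V) :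
    (T.addLeaf h hh).dv (some a) (some b) = T.dv a b := by
  unfold dv
  rw [addLeaf_lca_some]
  rfl

lemma addLeaf_dv_none (a : V) :
    (T.addLeaf h hh).dv (some a) none = T.dep a + h := by
  unfold dv
  rw [addLeaf_lca_none]
  simp [T.hdep0]

end AddLeaf

end RTree
namespace RTree

section SubAttach

variable {V : Type u} [DecidableEq V] (T : RTree V) (c₀ : V)

/-- vertices: `some (some v)` = old, `some none` = subdivision point `m`, `none` = new leaf -/
def subPr : Option (Option V) → Option (Option V)
  | none => some none
  | some none => some (some (T.pr c₀))
  | some (some v) => if v = c₀ then some none else some (some (T.pr v))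

def subDep (t₁ h₁ : ℝ) : Option (Option V) → ℝ
  | none => t₁ + h₁
  | some none => t₁
  | some (some v) => T.dep v

variable {T}

lemma subPr_rooted (c₀ : V) : ∀ (n : ℕ) (v : V), T.ht v ≤ n →
    ∃ k, (subPr T c₀)^[k] (some (some v)) = some (some T.root) := by
  intro n
  induction n with
  | zero =>
    intro v hv
    exact ⟨0, by rw [ht_eq_zero (Nat.le_zero.mp hv)]; rfl⟩
  | succ n ih =>
    intro v hv
    by_cases hvr : v = T.root
    · exact ⟨0, by rw [hvr]; rfl⟩
    by_cases hvc : v = c₀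
    · obtain ⟨k, hk⟩ := ih (T.pr v) (Nat.lt_succ_iff.mp (lt_of_lt_of_le (ht_pr_lt hvr) hv))
      refine ⟨k + 2, ?_⟩
      rw [Function.iterate_add_apply]
      have h2 : (subPr T c₀)^[2] (some (some v)) = some (some (T.pr v)) := by
        simp [subPr, hvc]
      rw [h2, hk]
    · obtain ⟨k, hk⟩ := ih (T.pr v) (Nat.lt_succ_iff.mp (lt_of_lt_of_le (ht_pr_lt hvr) hv))
      refine ⟨k + 1, ?_⟩
      rw [Function.iterate_add_apply]
      have h1 : (subPr T c₀)^[1] (some (some v)) = some (some (T.pr v)) := by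
        simp [subPr, hvc]
      rw [h1, hk]

variable (T)

def subAttach (hc₀ : c₀ ≠ T.root) (t h' : ℝ) (ht1 : T.dep (T.pr c₀) ≤ t)
    (ht2 : t ≤ T.dep c₀) (hh : 0 ≤ h') : RTree (Option (Option V)) where
  root := some (some T.root)
  pr := subPr T c₀
  hroot := by simp [subPr, Ne.symm hc₀, T.hroot, hc₀]
  rooted := by
    rintro (_ | (_ | v))
    · obtain ⟨k, hk⟩ := subPr_rooted c₀ (T.ht (T.pr c₀)) (T.pr c₀) le_rfl
      refine ⟨k + 2, ?_⟩
      rw [Function.iterate_add_apply]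
      have h2 : (subPr T c₀)^[2] none = some (some (T.pr c₀)) := by simp [subPr]
      rw [h2, hk]
    · obtain ⟨k, hk⟩ := subPr_rooted c₀ (T.ht (T.pr c₀)) (T.pr c₀) le_rfl
      refine ⟨k + 1, ?_⟩
      rw [Function.iterate_add_apply]
      have h1 : (subPr T c₀)^[1] (some none) = some (some (T.pr c₀)) := by simp [subPr]
      rw [h1, hk]
    · exact subPr_rooted c₀ (T.ht v) v le_rfl
  dep := subDep T t h'
  hdep0 := T.hdep0
  hmono := by
    rintro (_ | (_ | v))
    · simpa [subPr, subDep] using hh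
    · simpa [subPr, subDep] using ht1
    · by_cases hvc : v = c₀
      · subst hvc
        simpa [subPr, subDep] using ht2
      · simpa [subPr, subDep, hvc] using T.hmono v

variable {T} {c₀} {hc₀ : c₀ ≠ T.root} {t h' : ℝ} {ht1 : T.dep (T.pr c₀) ≤ t}
  {ht2 : t ≤ T.dep c₀} {hh : 0 ≤ h'}

local notation "T'" => subAttach T c₀ hc₀ t h' ht1 ht2 hh
local notation "em" => fun v => (some (some v) : Option (Option V))

@[simp] lemma sub_root : (T').root = some (some T.root) := rfl
@[simp] lemma sub_dep_e (v : V) : (T').dep (some (some v)) = T.dep v := rfl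
@[simp] lemma sub_dep_m : (T').dep (some none) = t := rfl
@[simp] lemma sub_dep_q : (T').dep none = t + h' := rfl

lemma sub_pr_ne_none (y : Option (Option V)) : subPr T c₀ y ≠ none := by
  rcases y with (_ | (_ | v)) <;> simp [subPr]
  split_ifs <;> simp

lemma sub_anc_none {x : Option (Option V)} (hx : (T').anc none x) : x = none := by
  obtain ⟨k, hk⟩ := hx
  cases k with
  | zero => exact hk
  | succ n =>
    rw [Function.iterate_succ_apply'] at hk
    exact absurd hk (sub_pr_ne_none _)

/-- step lemma : old vertices step towards their old parents (possibly via m) -/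
lemma sub_anc_e_pr (v : V) : (T').anc (some (some (T.pr v))) (some (some v)) := by
  by_cases hvc : v = c₀
  · refine ⟨2, ?_⟩
    simp [subAttach, subPr, hvc]
  · refine ⟨1, ?_⟩
    simp [subAttach, subPr, hvc]

lemma sub_anc_e_e {c v : V} : (T').anc (some (some c)) (some (some v)) ↔ T.anc c v := by
  constructor
  · -- by strong induction on ht v
    have key : ∀ (n : ℕ) (v : V), T.ht v ≤ n →
        (T').anc (some (some c)) (some (some v)) → T.anc c v := by
      intro n
      induction n with
      | zero =>
        intro v hv ha
        rw [ht_eq_zero (Nat.le_zero.mp hv)] at ha ⊢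
        have := anc_root_eq ha
        injection this with this; injection this with this
        rw [this]; exact anc_root _
      | succ n ih =>
        intro v hv ha
        by_cases hvr : v = T.root
        · subst hvr
          have := anc_root_eq ha
          injection this with this; injection this with this
          rw [this]; exact anc_root _
        by_cases hvc : v = c
        · rw [hvc]; exact anc_refl c
        have h1 : (T').anc (some (some c)) ((T').pr (some (some v))) :=
          anc_of_ne ha (by simp [hvc])
        have hht : T.ht (T.pr v) ≤ n := Nat.lt_succ_iff.mp (lt_of_lt_of_le (ht_pr_lt hvr) hv)
        by_cases hv0 : v = c₀
        · have hpr : (T').pr (some (some v)) = some none := by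
            simp [subAttach, subPr, hv0]
          rw [hpr] at h1
          have h2 : (T').anc (some (some c)) ((T').pr (some none)) :=
            anc_of_ne h1 (by simp)
          have hpr2 : (T').pr (some none) = some (some (T.pr c₀)) := by
            simp [subAttach, subPr]
          rw [hpr2] at h2
          have := ih (T.pr v) hht (by rw [hv0]; exact h2)
          exact anc_of_anc_pr this
        · have hpr : (T').pr (some (some v)) = some (some (T.pr v)) := by
            simp [subAttach, subPr, hv0]
          rw [hpr] at h1
          exact anc_of_anc_pr (ih (T.pr v) hht h1)
    exact key (T.ht v) v le_rfl
  · have key : ∀ (k : ℕ) (w : V), T.pr^[k] w = c →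
        (T').anc (some (some c)) (some (some w)) := by
      intro k
      induction k with
      | zero =>
        intro w hk
        rw [Function.iterate_zero_apply] at hk
        rw [hk]
        exact anc_refl _
      | succ n ihn =>
        intro w hk
        rw [Function.iterate_succ_apply] at hk
        exact anc_trans (sub_anc_e_pr w) (ihn (T.pr w) hk)
    rintro ⟨k, hk⟩
    exact key k v hk

lemma sub_anc_m_e {v : V} : (T').anc (some none) (some (some v)) ↔ T.anc c₀ v := by
  constructor
  · have key : ∀ (n : ℕ) (v : V), T.ht v ≤ n →
        (T').anc (some none) (some (some v)) → T.anc c₀ v := by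
      intro n
      induction n with
      | zero =>
        intro v hv ha
        rw [ht_eq_zero (Nat.le_zero.mp hv)] at ha
        exact absurd (anc_root_eq ha) (by simp)
      | succ n ih =>
        intro v hv ha
        by_cases hvr : v = T.root
        · subst hvr; exact absurd (anc_root_eq ha) (by simp)
        by_cases hv0 : v = c₀
        · rw [hv0]; exact anc_refl c₀
        have h1 : (T').anc (some none) ((T').pr (some (some v))) :=
          anc_of_ne ha (by simp)
        have hpr : (T').pr (some (some v)) = some (some (T.pr v)) := by
          simp [subAttach, subPr, hv0]
        rw [hpr] at h1
        have hht : T.ht (T.pr v) ≤ n := Nat.lt_succ_iff.mp (lt_of_lt_of_le (ht_pr_lt hvr) hv)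
        exact anc_of_anc_pr (ih (T.pr v) hht h1)
    exact key (T.ht v) v le_rfl
  · intro hv
    refine anc_trans (sub_anc_e_e.mpr hv) ⟨1, ?_⟩
    simp [subAttach, subPr]

lemma sub_anc_e_m {c : V} (hx : (T').anc (some (some c)) (some none)) :
    T.anc c (T.pr c₀) := by
  have h1 : (T').anc (some (some c)) ((T').pr (some none)) := anc_of_ne hx (by simp)
  have hpr : (T').pr (some none) = some (some (T.pr c₀)) := by simp [subAttach, subPr]
  rw [hpr] at h1
  exact sub_anc_e_e.mp h1

lemma sub_lca_e_e (a b : V) :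
    (T').lca (some (some a)) (some (some b)) = some (some (T.lca a b)) := by
  apply lca_char
  · exact sub_anc_e_e.mpr (lca_anc_left a b)
  · exact sub_anc_e_e.mpr (lca_anc_right a b)
  · rintro (_ | (_ | c)) hx1 hx2
    · exact absurd (sub_anc_none hx1) (by simp)
    · exact sub_anc_m_e.mpr (lca_max (sub_anc_m_e.mp hx1) (sub_anc_m_e.mp hx2))
    · exact sub_anc_e_e.mpr (lca_max (sub_anc_e_e.mp hx1) (sub_anc_e_e.mp hx2))

lemma sub_lca_m_of_anc {a : V} (ha : T.anc c₀ a) :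
    (T').lca (some (some a)) (some none) = some none := by
  apply lca_char
  · exact sub_anc_m_e.mpr ha
  · exact anc_refl _
  · intro x _ hx2
    exact hx2

lemma sub_lca_m_of_not_anc {a : V} (ha : ¬ T.anc c₀ a) :
    (T').lca (some (some a)) (some none) = some (some (T.lca a (T.pr c₀))) := by
  apply lca_char
  · exact sub_anc_e_e.mpr (lca_anc_left _ _)
  · refine anc_trans ⟨1, by simp [subAttach, subPr]⟩ (sub_anc_e_e.mpr (lca_anc_right _ _))
  · rintro (_ | (_ | c)) hx1 hx2
    · exact absurd (sub_anc_none hx1) (by simp)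
    · exact absurd (sub_anc_m_e.mp hx1) ha
    · exact sub_anc_e_e.mpr (lca_max (sub_anc_e_e.mp hx1) (sub_anc_e_m hx2))

lemma sub_lca_q (a : V) :
    (T').lca (some (some a)) none = (T').lca (some (some a)) (some none) := by
  apply lca_char
  · exact lca_anc_left _ _
  · exact anc_trans ⟨1, rfl⟩ (lca_anc_right _ _)
  · intro x hx1 hx2
    have hxq : x ≠ none := by
      rintro rfl
      exact absurd (sub_anc_none hx1) (by simp)
    have hxm : (T').anc x (some none) := anc_of_ne hx2 (Ne.symm hxq)
    exact lca_max hx1 hxm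

lemma sub_dv_e_e (a b : V) :
    (T').dv (some (some a)) (some (some b)) = T.dv a b := by
  unfold dv
  rw [sub_lca_e_e]
  rfl

/-- The distance from an old vertex to the new leaf. -/
lemma sub_dv_q {a v : V} (hv : T.anc c₀ v) :
    (T').dv (some (some a)) none
      = T.dep a + (t + h') - 2 * min (T.dep (T.lca a v)) t := by
  unfold dv
  rw [sub_lca_q]
  by_cases hca : T.anc c₀ a
  · rw [sub_lca_m_of_anc hca]
    have h1 : t ≤ T.dep (T.lca a v) :=
      le_trans ht2 (dep_anc_le (lca_max hca hv))
    rw [min_eq_right h1]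
    simp
  · rw [sub_lca_m_of_not_anc hca]
    have hlv : T.lca a v = T.lca a (T.pr c₀) := by
      apply lca_char
      · exact lca_anc_left _ _
      · exact anc_trans hv (anc_of_anc_pr (lca_anc_right _ _))
      · intro c hc1 hc2
        rcases anc_total hc2 hv with h | h
        · have hcne : c₀ ≠ c := fun he => hca (he ▸ hc1)
          exact lca_max hc1 (anc_of_ne h hcne)
        · exact absurd (anc_trans hc1 h) hca
    have h2 : T.dep (T.lca a v) ≤ t := by
      rw [hlv]
      exact le_trans (dep_anc_le (lca_anc_right _ _)) ht1
    rw [min_eq_left h2, hlv]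
    simp

end SubAttach

end RTree
section Build

open RTree

lemma minid_arith {ta ga fa : ℝ} (h1 : min ta ga ≤ fa) (h2 : min fa ta ≤ ga) (h3 : fa ≤ ta) :
    min ga ta = fa := by
  rcases le_total ga ta with h | h
  · rw [min_eq_left h]
    rw [min_eq_right h] at h1
    rw [min_eq_left h3] at h2
    linarith
  · rw [min_eq_right h]
    rw [min_eq_left h] at h1
    linarith

lemma find_edge {V : Type u} {T : RTree V} {t : ℝ} (htpos : 0 < t) :
    ∀ (n : ℕ) (v : V), T.ht v ≤ n → t ≤ T.dep v →
    ∃ c₀, c₀ ≠ T.root ∧ T.anc c₀ v ∧ T.dep (T.pr c₀) ≤ t ∧ t ≤ T.dep c₀ := by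
  intro n
  induction n with
  | zero =>
    intro v hv htv
    rw [ht_eq_zero (Nat.le_zero.mp hv), T.hdep0] at htv
    linarith
  | succ n ih =>
    intro v hv htv
    by_cases hvr : v = T.root
    · subst hvr; rw [T.hdep0] at htv; linarith
    by_cases hpr : T.dep (T.pr v) ≤ t
    · exact ⟨v, hvr, anc_refl v, hpr, htv⟩
    · obtain ⟨c₀, hc₀, hanc, h1, h2⟩ :=
        ih (T.pr v) (Nat.lt_succ_iff.mp (lt_of_lt_of_le (ht_pr_lt hvr) hv)) (not_le.mp hpr).le
      exact ⟨c₀, hc₀, anc_of_anc_pr hanc, h1, h2⟩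

variable {S : Type u}

lemma buildC (D : S → S → ℝ)
    (hnonneg : ∀ a b, 0 ≤ D a b)
    (heq : ∀ a b, D a b = 0 ↔ a = b)
    (hsymm : ∀ a b, D a b = D b a)
    (htri : ∀ a b c, D a c ≤ D a b + D b c)
    (hfour : ∀ w x y z, D x w + D y z ≤ max (D x y + D z w) (D x z + D y w))
    (x : S) (L : List S) :
    (x :: L).Nodup →
    ∃ (W : Type u) (_ : Fintype W) (_ : DecidableEq W) (T : RTree W) (f : S → W),
      f x = T.root ∧ ∀ a ∈ x :: L, ∀ b ∈ x :: L, T.dv (f a) (f b) = D a b := by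
  classical
  -- Gromov product inequality
  have gromov : ∀ u v w : S,
      min ((D x u + D x v - D u v)/2) ((D x v + D x w - D v w)/2)
        ≤ (D x u + D x w - D u w)/2 := by
    intro u v w
    rw [min_le_iff]
    have h4 := hfour w u x v
    rcases le_max_iff.mp h4 with h | h
    · right; have h5 := hsymm u x; linarith
    · left; linarith
  induction L with
  | nil =>
    intro _
    refine ⟨PUnit.{u+1}, inferInstance, inferInstance,
      ⟨PUnit.unit, id, rfl, fun _ => ⟨0, rfl⟩, fun _ => 0, rfl, fun _ => le_rfl⟩,
      fun _ => PUnit.unit, rfl, ?_⟩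
    intro a ha b hb
    simp only [List.mem_cons, List.not_mem_nil, or_false] at ha hb
    rw [ha, hb, (heq x x).mpr rfl]
    unfold RTree.dv
    simp
  | cons p L ih =>
    intro hnd
    have hpx : p ≠ x := by
      intro he; subst he; simp at hnd
    have hpL : p ∉ L := by
      have := hnd.of_cons; simp at this; tauto
    have hpxL : p ∉ x :: L := by
      simp only [List.mem_cons]; push_neg; exact ⟨hpx, hpL⟩
    have hnd' : (x :: L).Nodup := by
      rw [List.nodup_cons] at hnd ⊢
      refine ⟨?_, hnd.2.of_cons⟩
      intro hxL
      exact hnd.1 (List.mem_cons_of_mem _ hxL)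
    obtain ⟨W, instF, instD, T, f, hfx, hinv⟩ := ih hnd'
    -- depths of old points
    have hdep : ∀ a ∈ x :: L, T.dep (f a) = D x a := by
      intro a ha
      have h1 := hinv x (List.mem_cons_self) a ha
      rw [hfx, dv_root] at h1
      exact h1
    -- maximizer
    obtain ⟨bs, hbsmem', hbsmax'⟩ := Finset.exists_max_image (x :: L).toFinset
      (fun b => (D x p + D x b - D p b)/2) ⟨x, by simp⟩
    have hbsmem : bs ∈ x :: L := List.mem_toFinset.mp hbsmem'
    have hbsmax : ∀ a ∈ x :: L, (D x p + D x a - D p a)/2 ≤ (D x p + D x bs - D p bs)/2 :=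
      fun a ha => hbsmax' a (List.mem_toFinset.mpr ha)
    set t := (D x p + D x bs - D p bs)/2 with htdef
    have ht0 : 0 ≤ t := by
      have := hbsmax x (List.mem_cons_self)
      have h1 : D x x = 0 := (heq x x).mpr rfl
      have h2 := hsymm p x
      rw [htdef] at this ⊢
      linarith
    have htdep : t ≤ T.dep (f bs) := by
      rw [hdep bs hbsmem, htdef]
      have := htri x bs p
      have h2 := hsymm bs p
      linarith
    have hh' : 0 ≤ D x p - t := by
      rw [htdef]
      have := htri x p bs
      have h2 := hsymm p bs
      linarith
    -- min identity
    have minid : ∀ a ∈ x :: L,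
        min (T.dep (T.lca (f a) (f bs))) t = (D x p + D x a - D p a)/2 := by
      intro a ha
      have hg : T.dep (T.lca (f a) (f bs)) = (D x a + D x bs - D a bs)/2 := by
        have h1 := hinv a ha bs hbsmem
        have h2 := hdep a ha
        have h3 := hdep bs hbsmem
        unfold RTree.dv at h1
        linarith
      have G1 := gromov p bs a
      have G2 := gromov a p bs
      have e1 : (D x bs + D x a - D bs a)/2 = T.dep (T.lca (f a) (f bs)) := by
        rw [hg, hsymm bs a]; ring
      have e2 : (D x a + D x p - D a p)/2 = (D x p + D x a - D p a)/2 := by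
        rw [hsymm a p]; ring
      have e3 : (D x a + D x bs - D a bs)/2 = T.dep (T.lca (f a) (f bs)) := by
        rw [hg]
      rw [e1] at G1
      rw [e2, e3] at G2
      exact minid_arith G1 G2 (hbsmax a ha)
    by_cases htz : t ≤ 0
    · -- attach leaf at the root
      have htzero : t = 0 := le_antisymm htz ht0
      refine ⟨Option W, inferInstance, inferInstance, T.addLeaf (D x p) (hnonneg x p),
        fun s => if s = p then none else some (f s), ?_, ?_⟩
      · have hne : x ≠ p := hpx.symm
        simp only [hne, if_false, hfx]
        rfl
      · intro a ha b hb
        dsimp only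
        have hcase : ∀ c, c ∈ x :: p :: L → c = p ∨ c ∈ x :: L := by
          intro c hc
          simp only [List.mem_cons] at hc ⊢
          tauto
        have key : ∀ c ∈ x :: L,
            (T.addLeaf (D x p) (hnonneg x p)).dv (some (f c)) none = D c p := by
          intro c hc
          rw [addLeaf_dv_none, hdep c hc]
          have hm := minid c hc
          rw [htzero] at hm
          have hglb : 0 ≤ T.dep (T.lca (f c) (f bs)) := dep_nonneg _
          rw [min_eq_right hglb] at hm
          have h2 := hsymm c p
          linarith
        rcases hcase a ha with hap | ha' <;> rcases hcase b hb with hbp | hb'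
        · rw [if_pos hap, if_pos hbp, dv_self, hap, hbp, (heq p p).mpr rfl]
        · have hbn : b ≠ p := fun he => hpxL (he ▸ hb')
          rw [if_pos hap, if_neg hbn, dv_comm, key b hb', hap, hsymm b p]
        · have han : a ≠ p := fun he => hpxL (he ▸ ha')
          rw [if_neg han, if_pos hbp, key a ha', hbp]
        · have han : a ≠ p := fun he => hpxL (he ▸ ha')
          have hbn : b ≠ p := fun he => hpxL (he ▸ hb')
          rw [if_neg han, if_neg hbn, addLeaf_dv_some]
          exact hinv a ha' b hb'
    · -- subdivide an edge on the path from the root to bs and attach there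
      have htpos : 0 < t := not_le.mp htz
      obtain ⟨c₀, hc₀, hanc, hpr1, hpr2⟩ :=
        find_edge htpos (T.ht (f bs)) (f bs) le_rfl htdep
      refine ⟨Option (Option W), inferInstance, inferInstance,
        T.subAttach c₀ hc₀ t (D x p - t) hpr1 hpr2 hh',
        fun s => if s = p then none else some (some (f s)), ?_, ?_⟩
      · have hne : x ≠ p := hpx.symm
        simp only [hne, if_false, hfx]
        rfl
      · intro a ha b hb
        dsimp only
        have hcase : ∀ c, c ∈ x :: p :: L → c = p ∨ c ∈ x :: L := by
          intro c hc
          simp only [List.mem_cons] at hc ⊢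
          tauto
        have key : ∀ c ∈ x :: L,
            (T.subAttach c₀ hc₀ t (D x p - t) hpr1 hpr2 hh').dv (some (some (f c))) none
              = D c p := by
          intro c hc
          rw [sub_dv_q hanc, hdep c hc, minid c hc]
          have h2 := hsymm c p
          linarith
        rcases hcase a ha with hap | ha' <;> rcases hcase b hb with hbp | hb'
        · rw [if_pos hap, if_pos hbp, dv_self, hap, hbp, (heq p p).mpr rfl]
        · have hbn : b ≠ p := fun he => hpxL (he ▸ hb')
          rw [if_pos hap, if_neg hbn, dv_comm, key b hb', hap, hsymm b p]
        · have han : a ≠ p := fun he => hpxL (he ▸ ha')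
          rw [if_neg han, if_pos hbp, key a ha', hbp]
        · have han : a ≠ p := fun he => hpxL (he ▸ ha')
          have hbn : b ≠ p := fun he => hpxL (he ▸ hb')
          rw [if_neg han, if_neg hbn, sub_dv_e_e]
          exact hinv a ha' b hb'

end Build
/-- Every finite metric satisfying the four-point condition is a tree metric:
there is a finite tree whose vertex set contains `S` (via an embedding `ι`),
with nonnegative edge weights, realising `D` as the sum of edge weights along
the unique path between the corresponding vertices. -/
theorem stmt19 {S : Type u} [Fintype S] (D : S → S → ℝ)
    (hnonneg : ∀ a b, 0 ≤ D a b)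
    (heq : ∀ a b, D a b = 0 ↔ a = b)
    (hsymm : ∀ a b, D a b = D b a)
    (htri : ∀ a b c, D a c ≤ D a b + D b c)
    (hfour : ∀ w x y z, D x w + D y z ≤ max (D x y + D z w) (D x z + D y w)) :
    ∃ (V : Type u) (_ : Fintype V) (G : SimpleGraph V) (ι : S ↪ V)
      (wt : Sym2 V → ℝ),
      G.IsTree ∧ (∀ e, 0 ≤ wt e) ∧
      ∀ a b : S, ∀ p : G.Walk (ι a) (ι b), p.IsPath →
        D a b = (p.edges.map wt).sum := by
  classical
  by_cases hS : Nonempty S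
  · obtain ⟨x⟩ := hS
    set L := (Finset.univ.erase x).toList with hL
    have hnd : (x :: L).Nodup := by
      rw [List.nodup_cons]
      constructor
      · rw [hL]
        intro hx
        exact absurd (Finset.mem_toList.mp hx) (by simp)
      · exact Finset.nodup_toList _
    have hmem : ∀ a : S, a ∈ x :: L := by
      intro a
      by_cases hax : a = x
      · rw [hax]; exact List.mem_cons_self
      · refine List.mem_cons_of_mem _ ?_
        rw [hL, Finset.mem_toList]
        simp [hax]
    obtain ⟨W, instF, instD, T, f, hfx, hinv⟩ :=
      buildC D hnonneg heq hsymm htri hfour x L hnd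
    have hDf : ∀ a b : S, T.dv (f a) (f b) = D a b := fun a b => hinv a (hmem a) b (hmem b)
    have hinj : Function.Injective f := by
      intro a b hab
      have h1 := hDf a b
      rw [hab, RTree.dv_self] at h1
      exact (heq a b).mp h1.symm
    refine ⟨W, instF, T.graph, ⟨f, hinj⟩, T.wt, RTree.graph_isTree, fun e => RTree.wt_nonneg e, ?_⟩
    intro a b p hp
    have := RTree.pathSum p hp
    rw [this]
    exact (hDf a b).symm
  · -- S is empty
    haveI : IsEmpty S := not_nonempty_iff.mp hS
    let T0 : RTree PUnit.{u+1} :=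
      ⟨PUnit.unit, id, rfl, fun _ => ⟨0, rfl⟩, fun _ => 0, rfl, fun _ => le_rfl⟩
    exact ⟨PUnit.{u+1}, inferInstance, T0.graph,
      ⟨fun a => isEmptyElim a, fun a => isEmptyElim a⟩, T0.wt,
      RTree.graph_isTree, fun e => RTree.wt_nonneg e, fun a => isEmptyElim a⟩

-- axiom check
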